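/- Let n ≥ 2 be an integer, let A > 0 and ε > 0, and set ρ_* = A/√ε and W₀(ρ) = ((n−1)/2)·(1 + 2(n−1)/ρ²). There exist B > 1 and t_* ∈ (0, 1/e) such that for every γ ∈ [0, 1/2], the function v⁺(r,t) = (1/(−log t))·[ (1+γ)·W₀(r/√t) + B²/((−log t)·(r/√t)⁴) ] satisfies ∂_t v⁺(r,t) ≥ F[v⁺(·,t)](r) for all (r,t) with (B/√ε)·√(t/(−log t)) ≤ r ≤ 3ρ_*·√t and 0 < t < t_*. -/

import Mathlib

open Real Set Filter Topology

set_option maxHeartbeats 2000000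

/-- The quasilinear operator `F[v](r) = v v'' - (1/2)(v')² + ((n-1-v)/r) v' + (2(n-1)/r²) v (1-v)`. -/
noncomputable def Fop (n : ℕ) (v : ℝ → ℝ) (r : ℝ) : ℝ :=
  v r * deriv (deriv v) r - (1/2) * (deriv v r)^2
    + (((n : ℝ) - 1 - v r) / r) * deriv v r
    + (2 * ((n : ℝ) - 1) / r^2) * v r * (1 - v r)

/-- `W₀(ρ) = ((n-1)/2)(1 + 2(n-1)/ρ²)`. -/
noncomputable def W0 (n : ℕ) (ρ : ℝ) : ℝ :=
  (((n:ℝ) - 1) / 2) * (1 + 2 * ((n:ℝ) - 1) / ρ^2)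

/-- The parabolic-region supersolution
`v⁺(r,t) = (1/(-log t))·[(1+γ)W₀(r/√t) + B²/((-log t)(r/√t)⁴)]`. -/
noncomputable def vParSup (n : ℕ) (γ B : ℝ) (r t : ℝ) : ℝ :=
  (1 / (-Real.log t)) *
    ((1 + γ) * W0 n (r / Real.sqrt t) + B^2 / ((-Real.log t) * (r / Real.sqrt t)^4))

lemma hasDerivAt_cdivpow (c : ℝ) (k : ℕ) (hk : k ≠ 0) {r : ℝ} (hr : r ≠ 0) :
    HasDerivAt (fun x : ℝ => c / x ^ k) (-(k:ℝ) * c / r ^ (k + 1)) r := by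
  have h : HasDerivAt (fun x : ℝ => x ^ k) ((k:ℝ) * r ^ (k - 1)) r := hasDerivAt_pow k r
  have h2 := (h.inv (pow_ne_zero k hr)).const_mul c
  have hpow : (r ^ k) ^ 2 = r ^ (k - 1) * r ^ (k + 1) := by
    rw [← pow_mul, ← pow_add]; congr 1; omega
  have hval : -(k:ℝ) * c / r ^ (k + 1) = c * (-((k:ℝ) * r ^ (k - 1)) / (r ^ k) ^ 2) := by
    rw [hpow]
    have h1 : r ^ (k - 1) ≠ 0 := pow_ne_zero _ hr
    have h3 : r ^ (k + 1) ≠ 0 := pow_ne_zero _ hr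
    field_simp
  rw [hval]
  have h3 : (fun x : ℝ => c / x ^ k) = fun y => c * (fun x : ℝ => x ^ k)⁻¹ y := by
    funext x; simp [div_eq_mul_inv]
  rw [h3]; exact h2

lemma m_quad_bound (m : ℝ) (hm1 : 1 ≤ m) (hmint : 0 ≤ (m-1)*(m-2)) :
    m^4*(3-m) ≤ 2*m^3 := by nlinarith [mul_nonneg hmint (by positivity : (0:ℝ) ≤ m^3)]

lemma m32_bound (m : ℝ) (hm1 : 1 ≤ m) (hmint : 0 ≤ (m-1)*(m-2)) : m^3*(2-m) ≤ 1 := by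
  nlinarith [mul_nonneg hmint (by positivity : (0:ℝ) ≤ m^2), sq_nonneg (m-1), hm1]

lemma sub_nonneg_aux (γ m B s εv u : ℝ)
    (hγ0 : 0 ≤ γ) (hγ1 : γ ≤ 1/2) (hm1 : 1 ≤ m) (hmint : 0 ≤ (m-1)*(m-2))
    (hs : 18 ≤ s) (hε : 0 < εv)
    (hB2 : 2 ≤ B) (hB36 : 36*m^2 ≤ B^2) (hBe1 : 80*m*εv ≤ B^2) (hBe2 : 48*εv^2 ≤ B^2)
    (hu0 : 0 < u) (hBu : B^2*u ≤ εv*s) :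
    0 ≤ m*B^2*s^2 + (1+γ)*m*B^2*(m-6)*s + (1+γ)^2*m^4*(m-3)*s^2
        + 2*(1+γ)*m^2*B^2*(m-6)*s*u + B^4*(m-8)*u^2 := by
  have hs0 : (0:ℝ) < s := by linarith
  have hm0 : (0:ℝ) < m := by linarith
  have hB0 : (0:ℝ) < B := by linarith
  have hpos : (0:ℝ) ≤ m*B^2*s^2 := by positivity
  have hγ0' : (0:ℝ) ≤ 1+γ := by linarith
  have hco : -(15/2) ≤ (1+γ)*(m-6) := by
    have h := mul_nonneg hγ0' (sub_nonneg.mpr hm1)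
    nlinarith
  have e1 : 0 ≤ (1+γ)*m*B^2*(m-6)*s + (15/36)*m*B^2*s^2 := by
    have inner : 0 ≤ (1+γ)*(m-6) + (15/36)*s := by linarith
    nlinarith [mul_nonneg (by positivity : (0:ℝ) ≤ m*B^2*s) inner]
  have hq := m_quad_bound m hm1 hmint
  have hP2 : (1+γ)^2 ≤ 9/4 := by nlinarith
  have h2' : (1+γ)^2*(m^4*(3-m)) ≤ (9/2)*m^3 := by
    rcases le_or_gt m 3 with h | h
    · have h34 : (0:ℝ) ≤ m^4*(3-m) := mul_nonneg (by positivity) (by linarith)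
      have := mul_le_mul_of_nonneg_right hP2 h34
      nlinarith
    · have h34 : m^4*(3-m) ≤ 0 := by nlinarith [pow_pos hm0 4]
      have : (1+γ)^2*(m^4*(3-m)) ≤ 0 := mul_nonpos_of_nonneg_of_nonpos (by positivity) h34
      nlinarith [pow_pos hm0 3]
  have h3 : (9/2)*m^3 ≤ (1/8)*m*B^2 := by
    nlinarith [mul_le_mul_of_nonneg_left hB36 (by positivity : (0:ℝ) ≤ m/8)]
  have e2 : 0 ≤ (1+γ)^2*m^4*(m-3)*s^2 + (1/8)*m*B^2*s^2 := by
    have inner : 0 ≤ (1+γ)^2*(m^4*(m-3)) + (1/8)*m*B^2 := by nlinarith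
    nlinarith [mul_le_mul_of_nonneg_right inner (sq_nonneg s)]
  have hBu' : (0:ℝ) ≤ B^2*u := by positivity
  have hK : s*(B^2*u) ≤ εv*s^2 := by nlinarith [mul_le_mul_of_nonneg_left hBu hs0.le]
  have hK0 : 0 ≤ s*(B^2*u) := by positivity
  have e3 : 0 ≤ 2*(1+γ)*m^2*B^2*(m-6)*s*u + (15/80)*m*B^2*s^2 := by
    have hq15 : -(15:ℝ) ≤ 2*((1+γ)*(m-6)) := by linarith
    have hstep : m^2*(2*((1+γ)*(m-6)))*(s*(B^2*u)) ≥ -(15*(m^2*(εv*s^2)))  := by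
      rcases le_or_gt 0 (2*((1+γ)*(m-6))) with h | h
      · have : 0 ≤ m^2*(2*((1+γ)*(m-6)))*(s*(B^2*u)) :=
          mul_nonneg (mul_nonneg (sq_nonneg m) h) hK0
        nlinarith [mul_nonneg (sq_nonneg m) (mul_nonneg hε.le (sq_nonneg s))]
      · have h4 : m^2*(2*((1+γ)*(m-6)))*(s*(B^2*u)) ≥ m^2*(2*((1+γ)*(m-6)))*(εv*s^2) := by
          have hcoef : m^2*(2*((1+γ)*(m-6))) ≤ 0 :=
            mul_nonpos_of_nonneg_of_nonpos (sq_nonneg m) h.le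
          nlinarith [mul_le_mul_of_nonpos_left hK hcoef]
        have h5 : m^2*(2*((1+γ)*(m-6)))*(εv*s^2) ≥ -(15*(m^2*(εv*s^2))) := by
          have hpos2 : (0:ℝ) ≤ εv*s^2 := by positivity
          nlinarith [mul_le_mul_of_nonneg_right (mul_le_mul_of_nonneg_left hq15 (sq_nonneg m)) hpos2]
        linarith
    have h15 : 15*(m^2*(εv*s^2)) ≤ (15/80)*m*B^2*s^2 := by
      nlinarith [mul_le_mul_of_nonneg_left hBe1 (by positivity : (0:ℝ) ≤ (15/80)*m*s^2)]
    nlinarith [hstep, h15]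
  have e4 : 0 ≤ B^4*(m-8)*u^2 + 7*(εv^2*s^2) := by
    have h1 : (B^2*u)^2 ≤ (εv*s)^2 := pow_le_pow_left₀ hBu' hBu 2
    nlinarith [h1, mul_nonneg (mul_nonneg (by positivity : (0:ℝ) ≤ B^4)
      (by linarith : (0:ℝ) ≤ m - 1)) (sq_nonneg u)]
  have e4b : 7*(εv^2*s^2) ≤ (7/48)*m*B^2*s^2 := by
    have hA := mul_le_mul_of_nonneg_left hBe2 (by positivity : (0:ℝ) ≤ (7/48)*s^2)
    have hBb : (0:ℝ) ≤ (m-1)*B^2*s^2 :=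
      mul_nonneg (mul_nonneg (by linarith) (sq_nonneg B)) (sq_nonneg s)
    linarith [hA, hBb]
  linarith only [e1, e2, e3, e4, e4b, hpos]

lemma key (γ m B t s εv r a b d : ℝ)
    (hγ0 : 0 ≤ γ) (hγ1 : γ ≤ 1/2) (hm1 : 1 ≤ m) (hmint : 0 ≤ (m-1)*(m-2))
    (ht0 : 0 < t) (hs : 18 ≤ s) (hε : 0 < εv) (hr : 0 < r)
    (hB2 : 2 ≤ B) (hB36 : 36*m^2 ≤ B^2) (hBe1 : 80*m*εv ≤ B^2) (hBe2 : 48*εv^2 ≤ B^2)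
    (hxu : 1/r^2 ≤ εv*s/(B^2*t))
    (ha : a = (1+γ)*m/(2*s)) (hb : b = (1+γ)*m^2*t/s) (hd : d = B^2*t^2/s^2) :
    (a + b/r^2 + d/r^4) * (6*b/r^4 + 20*d/r^6)
      - 1/2 * (-2*b/r^3 - 4*d/r^5)^2
      + ((m - (a + b/r^2 + d/r^4)) / r) * (-2*b/r^3 - 4*d/r^5)
      + 2*m/r^2 * (a + b/r^2 + d/r^4) * (1 - (a + b/r^2 + d/r^4))
    ≤ (1+γ)*m/(2*t*s^2) + (1+γ)*m^2*(1/s + 1/s^2)/r^2 + B^2*(2*t/s^2 + 2*t/s^3)/r^4 := by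
  subst ha hb hd
  have hs0 : (0:ℝ) < s := by linarith
  have hB0 : (0:ℝ) < B := by linarith
  have hm0 : (0:ℝ) < m := by linarith
  have hγ0' : (0:ℝ) ≤ 1+γ := by linarith
  have hrne : r ≠ 0 := hr.ne'
  have hsne : s ≠ 0 := hs0.ne'
  have htne : t ≠ 0 := ht0.ne'
  have hu0 : 0 < t*(1/r^2) := by positivity
  have hBu : B^2*(t*(1/r^2)) ≤ εv*s := by
    have h1 : B^2*t*(1/r^2) ≤ B^2*t*(εv*s/(B^2*t)) :=
      mul_le_mul_of_nonneg_left hxu (by positivity)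
    have h2 : B^2*t*(εv*s/(B^2*t)) = εv*s := by field_simp
    calc B^2*(t*(1/r^2)) = B^2*t*(1/r^2) := by ring
      _ ≤ εv*s := by rw [← h2]; exact h1
  have hsub := sub_nonneg_aux γ m B s εv (t*(1/r^2)) hγ0 hγ1 hm1 hmint hs hε hB2 hB36 hBe1 hBe2 hu0 hBu
  have hc0 : 0 ≤ (1+γ)*m/(2*t*s^2) := by positivity
  have hc1 : 0 ≤ (1+γ)*m^2/s^2 + (1+γ)^2*m^3/(2*s^2) := by positivity
  have hc2 : 0 ≤ 2*t/s^3 * (B^2*s + B^2 + (1+γ)^2*m^3*(m-2)*s) := by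
    have h32 := m32_bound m hm1 hmint
    have hP2 : (1+γ)^2 ≤ 9/4 := by nlinarith
    have inner : 0 ≤ B^2*s + B^2 + (1+γ)^2*m^3*(m-2)*s := by
      rcases le_or_gt 2 m with h | h
      · have : 0 ≤ (1+γ)^2*m^3*(m-2)*s :=
          mul_nonneg (mul_nonneg (mul_nonneg (by positivity) (by positivity)) (by linarith)) hs0.le
        nlinarith
      · have hq : (1+γ)^2*(m^3*(2-m)) ≤ 9/4 := by
          have h0 : (0:ℝ) ≤ m^3*(2-m) := mul_nonneg (by positivity) (by linarith)
          nlinarith [mul_le_mul_of_nonneg_right hP2 h0]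
        have : (1+γ)^2*(m^3*(2-m))*s ≤ (9/4)*s := mul_le_mul_of_nonneg_right hq hs0.le
        nlinarith [sq_nonneg B, hB2]
    positivity
  have hsum : 0 ≤ (1/r^2)^3 * (2*t^2/s^4 *
      (m*B^2*s^2 + (1+γ)*m*B^2*(m-6)*s + (1+γ)^2*m^4*(m-3)*s^2
        + 2*(1+γ)*m^2*B^2*(m-6)*s*(t*(1/r^2)) + B^4*(m-8)*(t*(1/r^2))^2)) := by
    apply mul_nonneg (by positivity)
    exact mul_nonneg (by positivity) hsub
  have hid : ((1+γ)*m/(2*t*s^2) + (1+γ)*m^2*(1/s + 1/s^2)/r^2 + B^2*(2*t/s^2 + 2*t/s^3)/r^4)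
      - (((1+γ)*m/(2*s) + ((1+γ)*m^2*t/s)/r^2 + (B^2*t^2/s^2)/r^4) * (6*((1+γ)*m^2*t/s)/r^4 + 20*(B^2*t^2/s^2)/r^6)
      - 1/2 * (-2*((1+γ)*m^2*t/s)/r^3 - 4*(B^2*t^2/s^2)/r^5)^2
      + ((m - ((1+γ)*m/(2*s) + ((1+γ)*m^2*t/s)/r^2 + (B^2*t^2/s^2)/r^4)) / r) * (-2*((1+γ)*m^2*t/s)/r^3 - 4*(B^2*t^2/s^2)/r^5)
      + 2*m/r^2 * ((1+γ)*m/(2*s) + ((1+γ)*m^2*t/s)/r^2 + (B^2*t^2/s^2)/r^4) * (1 - ((1+γ)*m/(2*s) + ((1+γ)*m^2*t/s)/r^2 + (B^2*t^2/s^2)/r^4)))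
    = (1+γ)*m/(2*t*s^2)
      + ((1+γ)*m^2/s^2 + (1+γ)^2*m^3/(2*s^2))*(1/r^2)
      + (2*t/s^3 * (B^2*s + B^2 + (1+γ)^2*m^3*(m-2)*s))*(1/r^2)^2
      + (1/r^2)^3 * (2*t^2/s^4 *
        (m*B^2*s^2 + (1+γ)*m*B^2*(m-6)*s + (1+γ)^2*m^4*(m-3)*s^2
          + 2*(1+γ)*m^2*B^2*(m-6)*s*(t*(1/r^2)) + B^4*(m-8)*(t*(1/r^2))^2)) := by
    field_simp
    ring
  have hmul1 : 0 ≤ ((1+γ)*m^2/s^2 + (1+γ)^2*m^3/(2*s^2))*(1/r^2) :=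
    mul_nonneg hc1 (by positivity)
  have hmul2 : 0 ≤ (2*t/s^3 * (B^2*s + B^2 + (1+γ)^2*m^3*(m-2)*s))*(1/r^2)^2 :=
    mul_nonneg hc2 (by positivity)
  linarith [hid, hc0, hmul1, hmul2, hsum]

/-- Parabolic-region supersolution: for suitable `B > 1` and `t_* ∈ (0, 1/e)`, `v⁺` is a
supersolution of `v_t = F[v]` on `(B/√ε)√(t/(-log t)) ≤ r ≤ 3ρ_*√t`, `0 < t < t_*`,
for every `γ ∈ [0, 1/2]`. -/
theorem stmt5 (n : ℕ) (hn : 2 ≤ n) (A ε : ℝ) (hA : 0 < A) (hε : 0 < ε) :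
    ∃ B > (1:ℝ), ∃ tstar ∈ Ioo (0:ℝ) (Real.exp (-1)),
      ∀ γ ∈ Icc (0:ℝ) (1/2),
        ∀ r t : ℝ,
          B / Real.sqrt ε * Real.sqrt (t / (-Real.log t)) ≤ r →
          r ≤ 3 * (A / Real.sqrt ε) * Real.sqrt t →
          0 < t → t < tstar →
          Fop n (fun ρ => vParSup n γ B ρ t) r ≤ deriv (fun s => vParSup n γ B r s) t := by
  have hm1 : (1:ℝ) ≤ (n:ℝ) - 1 := by
    have : (2:ℝ) ≤ (n:ℝ) := by exact_mod_cast hn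
    linarith
  have hmint : 0 ≤ ((n:ℝ)-1-1)*((n:ℝ)-1-2) := by
    rcases eq_or_lt_of_le hn with h | h
    · rw [← h]; norm_num
    · have h3 : (3:ℝ) ≤ (n:ℝ) := by exact_mod_cast h
      nlinarith
  set B : ℝ := 6*((n:ℝ)-1) + 80*((n:ℝ)-1)*ε + 48*ε^2 + 2 with hBdef
  have hmε : 0 ≤ 80*((n:ℝ)-1)*ε := by nlinarith
  have hε2 : 0 ≤ 48*ε^2 := by positivity
  have hB2 : (2:ℝ) ≤ B := by rw [hBdef]; nlinarith
  have hB0 : (0:ℝ) < B := by linarith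
  have hB6m : 6*((n:ℝ)-1) ≤ B := by rw [hBdef]; nlinarith
  have hB36 : 36*((n:ℝ)-1)^2 ≤ B^2 := by
    nlinarith [mul_nonneg (sub_nonneg.mpr hB6m) (by linarith : (0:ℝ) ≤ B + 6*((n:ℝ)-1))]
  have hBe1 : 80*((n:ℝ)-1)*ε ≤ B^2 := by
    have h1 : 80*((n:ℝ)-1)*ε ≤ B := by rw [hBdef]; nlinarith
    nlinarith [mul_nonneg hB0.le (by linarith : (0:ℝ) ≤ B - 1)]
  have hBe2 : 48*ε^2 ≤ B^2 := by
    have h1 : 48*ε^2 ≤ B := by rw [hBdef]; nlinarith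
    nlinarith [mul_nonneg hB0.le (by linarith : (0:ℝ) ≤ B - 1)]
  refine ⟨B, by linarith, Real.exp (-18), ⟨Real.exp_pos _, Real.exp_lt_exp.mpr (by norm_num)⟩, ?_⟩
  intro γ hγ r t hr1 hr2up ht0 ht1
  have hγ0 : 0 ≤ γ := hγ.1
  have hγ1 : γ ≤ 1/2 := hγ.2
  have ht1' : t < 1 := lt_trans ht1 (by rw [Real.exp_lt_one_iff]; norm_num)
  have hlt : Real.log t < -18 := by
    have h := Real.log_lt_log ht0 ht1
    rwa [Real.log_exp] at h
  have hs18 : 18 ≤ -Real.log t := by linarith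
  have hs0 : (0:ℝ) < -Real.log t := by linarith
  have hsne : -Real.log t ≠ 0 := hs0.ne'
  have hlogne : Real.log t ≠ 0 := by intro h; rw [h] at hlt; norm_num at hlt
  have htne : t ≠ 0 := ht0.ne'
  have hL0 : 0 < B / Real.sqrt ε * Real.sqrt (t / (-Real.log t)) := by
    apply mul_pos (div_pos hB0 (Real.sqrt_pos.mpr hε))
    exact Real.sqrt_pos.mpr (by positivity)
  have hr0 : 0 < r := lt_of_lt_of_le hL0 hr1
  have hrne : r ≠ 0 := hr0.ne'
  -- region bound : 1/r² ≤ ε s / (B² t)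
  have hxu : 1/r^2 ≤ ε*(-Real.log t)/(B^2*t) := by
    have hL2 : (B / Real.sqrt ε * Real.sqrt (t / (-Real.log t)))^2 = B^2*t/(ε*(-Real.log t)) := by
      rw [mul_pow, div_pow, Real.sq_sqrt hε.le, Real.sq_sqrt (by positivity : (0:ℝ) ≤ t / (-Real.log t))]
      field_simp
    have hrr : B^2*t/(ε*(-Real.log t)) ≤ r^2 := by
      rw [← hL2]
      exact pow_le_pow_left₀ hL0.le hr1 2
    have h1 : 1/r^2 ≤ 1/(B^2*t/(ε*(-Real.log t))) :=
      one_div_le_one_div_of_le (by positivity) hrr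
    rwa [one_div_div] at h1
  -- abbreviations for the coefficients
  set aE : ℝ := (1+γ)*((n:ℝ)-1)/(2*(-Real.log t)) with haE
  set bE : ℝ := (1+γ)*((n:ℝ)-1)^2*t/(-Real.log t) with hbE
  set dE : ℝ := B^2*t^2/(-Real.log t)^2 with hdE
  -- spatial representation
  have hrep : ∀ ρ : ℝ, ρ ≠ 0 → vParSup n γ B ρ t = aE + bE/ρ^2 + dE/ρ^4 := by
    intro ρ hρ
    have e2 : (ρ / Real.sqrt t)^2 = ρ^2/t := by rw [div_pow, Real.sq_sqrt ht0.le]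
    have e4 : (ρ / Real.sqrt t)^4 = ρ^4/t^2 := by
      rw [div_pow, show (Real.sqrt t)^4 = ((Real.sqrt t)^2)^2 by ring, Real.sq_sqrt ht0.le]
    rw [vParSup, W0, e2, e4, haE, hbE, hdE]
    field_simp
    ring
  have hfg : (fun ρ => vParSup n γ B ρ t) =ᶠ[𝓝 r] (fun ρ => aE + bE/ρ^2 + dE/ρ^4) := by
    filter_upwards [eventually_ne_nhds hrne] with ρ hρ
    exact hrep ρ hρ
  have hv : vParSup n γ B r t = aE + bE/r^2 + dE/r^4 := hrep r hrne
  have hd1 : deriv (fun ρ => vParSup n γ B ρ t) r = -2*bE/r^3 - 4*dE/r^5 := by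
    rw [hfg.deriv_eq]
    have h := ((hasDerivAt_const r aE).add (hasDerivAt_cdivpow bE 2 (by norm_num) hrne)).add
      (hasDerivAt_cdivpow dE 4 (by norm_num) hrne)
    simp only [Pi.add_def] at h
    rw [h.deriv]
    push_cast
    ring
  have hfg2 : deriv (fun ρ => vParSup n γ B ρ t) =ᶠ[𝓝 r]
      (fun x => (-(2*bE))/x^3 + (-(4*dE))/x^5) := by
    apply hfg.deriv.trans
    filter_upwards [eventually_ne_nhds hrne] with ρ hρ
    have h := ((hasDerivAt_const ρ aE).add (hasDerivAt_cdivpow bE 2 (by norm_num) hρ)).add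
      (hasDerivAt_cdivpow dE 4 (by norm_num) hρ)
    simp only [Pi.add_def] at h
    rw [h.deriv]
    push_cast
    ring
  have hd2 : deriv (deriv (fun ρ => vParSup n γ B ρ t)) r = 6*bE/r^4 + 20*dE/r^6 := by
    rw [hfg2.deriv_eq]
    have h := (hasDerivAt_cdivpow (-(2*bE)) 3 (by norm_num) hrne).add
      (hasDerivAt_cdivpow (-(4*dE)) 5 (by norm_num) hrne)
    simp only [Pi.add_def] at h
    rw [h.deriv]
    push_cast
    ring
  -- time representation
  have hteq : (fun s => vParSup n γ B r s) =ᶠ[𝓝 t]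
      (fun τ => (1+γ)*((n:ℝ)-1)/2 * (-Real.log τ)⁻¹
        + (1+γ)*((n:ℝ)-1)^2/r^2 * (τ * (-Real.log τ)⁻¹)
        + B^2/r^4 * (τ^2 * ((-Real.log τ)^2)⁻¹)) := by
    filter_upwards [Ioo_mem_nhds ht0 ht1'] with τ hτ
    have hτ0 : 0 < τ := hτ.1
    have hτln : Real.log τ < 0 := Real.log_neg hτ.1 hτ.2
    have hτlogne : Real.log τ ≠ 0 := ne_of_lt hτln
    have e2 : (r / Real.sqrt τ)^2 = r^2/τ := by rw [div_pow, Real.sq_sqrt hτ0.le]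
    have e4 : (r / Real.sqrt τ)^4 = r^4/τ^2 := by
      rw [div_pow, show (Real.sqrt τ)^4 = ((Real.sqrt τ)^2)^2 by ring, Real.sq_sqrt hτ0.le]
    rw [vParSup, W0, e2, e4]
    field_simp
    ring
  have hN : HasDerivAt (fun τ : ℝ => -Real.log τ) (-t⁻¹) t := (Real.hasDerivAt_log htne).neg
  have hIs : HasDerivAt (fun τ : ℝ => (-Real.log τ)⁻¹) (-(-t⁻¹) / (-Real.log t)^2) t :=
    hN.inv hsne
  have h2t : HasDerivAt (fun τ : ℝ => τ * (-Real.log τ)⁻¹)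
      (1 * (-Real.log t)⁻¹ + t * (-(-t⁻¹) / (-Real.log t)^2)) t :=
    (hasDerivAt_id' t).mul hIs
  have hq2 : HasDerivAt (fun τ : ℝ => ((-Real.log τ)^2)⁻¹)
      (-((2:ℕ) * (-Real.log t)^(2-1) * (-t⁻¹)) / ((-Real.log t)^2)^2) t :=
    (hN.pow 2).inv (pow_ne_zero 2 hsne)
  have h3t : HasDerivAt (fun τ : ℝ => τ^2 * ((-Real.log τ)^2)⁻¹)
      ((2:ℕ) * t^(2-1) * ((-Real.log t)^2)⁻¹
        + t^2 * (-((2:ℕ) * (-Real.log t)^(2-1) * (-t⁻¹)) / ((-Real.log t)^2)^2)) t :=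
    (hasDerivAt_pow 2 t).mul hq2
  have hD : deriv (fun s => vParSup n γ B r s) t
      = (1+γ)*((n:ℝ)-1)/(2*t*(-Real.log t)^2)
        + (1+γ)*((n:ℝ)-1)^2*(1/(-Real.log t) + 1/(-Real.log t)^2)/r^2
        + B^2*(2*t/(-Real.log t)^2 + 2*t/(-Real.log t)^3)/r^4 := by
    rw [hteq.deriv_eq]
    have h := ((hIs.const_mul ((1+γ)*((n:ℝ)-1)/2)).add
      (h2t.const_mul ((1+γ)*((n:ℝ)-1)^2/r^2))).add (h3t.const_mul (B^2/r^4))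
    simp only [Pi.add_def] at h
    rw [h.deriv]
    push_cast
    field_simp
  rw [hD, Fop, hv, hd1, hd2]
  exact key γ ((n:ℝ)-1) B t (-Real.log t) ε r aE bE dE hγ0 hγ1 hm1 hmint ht0 hs18 hε hr0
    hB2 hB36 hBe1 hBe2 hxu haE hbE hdE
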